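/- Let E be a d-regular graph with expansion ratio h(E) ≥ 1 and let S' = {s'_1,...,s'_m} ⊆ V(E) be a set with m ≤ |V(E)|/2. Then there exist pairwise edge-disjoint paths Q_1,...,Q_m in E such that for each i ∈ [m], Q_i = (q_i^1,...,q_i^{ℓ_i}) for some ℓ_i ∈ ℕ with q_i^{ℓ_i} = s'_i, q_i^j ∈ S' for all j > 1, and q_i^1 ∈ V(E) \ S'. -/

import Mathlib

open SimpleGraph

variable {V : Type*}

/-- The closed neighbourhood `N_G(S) = S ∪ {v : v adjacent to some w ∈ S}`. -/
def closedNbhd (G : SimpleGraph V) (S : Set V) : Set V :=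
  S ∪ {v | ∃ w ∈ S, G.Adj v w}

/-- `G` has maximum degree at most `d`. -/
def MaxDegLE (G : SimpleGraph V) (d : ℕ) : Prop :=
  ∀ v, (G.neighborSet v).ncard ≤ d

/-- `G` is `ε`-far from being Hamiltonian (w.r.t. the degree bound `d`):
modifying at most `ε·d·|V|` edges cannot make `G` Hamiltonian. -/
def FarFromHamiltonian [Fintype V] [DecidableEq V] (G : SimpleGraph V) (d : ℕ) (ε : ℝ) : Prop :=
  ∀ F : Finset (Sym2 V), (∀ e ∈ F, ¬ e.IsDiag) →
    (F.card : ℝ) ≤ ε * d * (Fintype.card V) →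
    ¬ (SimpleGraph.fromEdgeSet (symmDiff G.edgeSet (↑F : Set (Sym2 V)))).IsHamiltonian

/-- `G` is `δ`-locally Hamiltonian on the class `C`: for every `S` with `|S| ≤ δ·|V|`
there is a Hamiltonian `H ∈ C` (on the same vertex set, hence of the same order),
a set `T`, and an isomorphism `G[N_G(S)] ≅ H[N_H(T)]` mapping `S` onto `T`. -/
def LocallyHamiltonian [Fintype V] [DecidableEq V] (C : SimpleGraph V → Prop) (δ : ℝ)
    (G : SimpleGraph V) : Prop :=
  ∀ S : Set V, (S.ncard : ℝ) ≤ δ * (Fintype.card V) →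
    ∃ H : SimpleGraph V, C H ∧ H.IsHamiltonian ∧ ∃ T : Set V,
      ∃ φ : (SimpleGraph.induce (closedNbhd G S) G) ≃g (SimpleGraph.induce (closedNbhd H T) H),
        ∀ x : closedNbhd G S, (x : V) ∈ S ↔ ((φ x : V) ∈ T)

/-- `S` witnesses non-Hamiltonicity of `G` among graphs of maximum degree at most `d`:
no Hamiltonian graph `H` of the same order with degree bound `d` admits a set `T` and an
isomorphism `G[N_G(S)] ≅ H[N_H(T)]` mapping `S` onto `T`. -/
def WitnessesNonHamiltonicity [Fintype V] [DecidableEq V] (G : SimpleGraph V) (d : ℕ)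
    (S : Set V) : Prop :=
  ∀ H : SimpleGraph V, H.IsHamiltonian → MaxDegLE H d → ∀ T : Set V,
    ¬ ∃ φ : (SimpleGraph.induce (closedNbhd G S) G) ≃g (SimpleGraph.induce (closedNbhd H T) H),
        ∀ x : closedNbhd G S, (x : V) ∈ S ↔ ((φ x : V) ∈ T)

/-- `E` is `d`-regular. -/
def IsRegularDeg (E : SimpleGraph V) (d : ℕ) : Prop :=
  ∀ v, (E.neighborSet v).ncard = d

/-- The arcs of the directed graph `→E` obtained by replacing each edge by two arcs. -/
abbrev Arc (E : SimpleGraph V) : Type _ := {p : V × V // E.Adj p.1 p.2}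

instance arcDecPred [Fintype V] (E : SimpleGraph V) [DecidableRel E.Adj] :
    DecidablePred (fun p : V × V => E.Adj p.1 p.2) := fun p => ‹DecidableRel E.Adj› p.1 p.2

/-- The vertex set of `G_E`: 31 `a`-vertices per arc and 6 `b`-vertices per vertex. -/
abbrev GEVert (E : SimpleGraph V) : Type _ := (Arc E × Fin 31) ⊕ (V × Fin 6)

/-- For `1 ≤ j ≤ 31`, the vertex `a_j^e` of `G_E`. -/
def aV {E : SimpleGraph V} (e : Arc E) (j : ℕ) : GEVert E :=
  Sum.inl (e, ⟨(j - 1) % 31, by omega⟩)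

/-- For `1 ≤ k ≤ 6`, the vertex `b_k^v` of `G_E`. -/
def bV (E : SimpleGraph V) (v : V) (k : ℕ) : GEVert E :=
  Sum.inr (v, ⟨(k - 1) % 6, by omega⟩)

/-- Adjacency (with 1-based indices) inside the gadget `P(v_1,…,v_31)` (unsymmetrised):
`{v_i, v_{i+1}}` for `1 ≤ i ≤ 30`, `{v_j, v_{j+3}}` for `j ∈ {2,27}`, and
`{v_k, v_{k+5}}` for `k ∈ {6,12,15,21}`. -/
def gadgetRel (i j : ℕ) : Prop :=
  (1 ≤ i ∧ i ≤ 30 ∧ j = i + 1) ∨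
  ((i = 2 ∧ j = 5) ∨ (i = 27 ∧ j = 30) ∨ (i = 6 ∧ j = 11) ∨ (i = 12 ∧ j = 17) ∨
    (i = 15 ∧ j = 20) ∨ (i = 21 ∧ j = 26))

/-- The generating relation for the edges of `G_E`: the gadget edges, the cyclic edges given by
the linear order `f` on arcs, and the link edges (a link from the gadget of an arc `e = (u,v)`
to the gadget of an arc `e' = (v,w)` via `b_1^v,…,b_6^v`). -/
def GERel [Fintype V] (E : SimpleGraph V) [DecidableRel E.Adj]
    (f : Arc E ≃ Fin (Fintype.card (Arc E))) (x y : GEVert E) : Prop :=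
  (∃ (e : Arc E) (i j : ℕ), gadgetRel i j ∧ x = aV e i ∧ y = aV e j) ∨
  (∃ e e' : Arc E, (f e').val = ((f e).val + 1) % (Fintype.card (Arc E)) ∧
      x = aV e 31 ∧ y = aV e' 1) ∨
  (∃ e e' : Arc E, e.1.2 = e'.1.1 ∧
    ((x = aV e 23 ∧ y = aV e' 3) ∨ (x = aV e 18 ∧ y = aV e' 8) ∨
     (x = aV e 29 ∧ y = aV e' 9) ∨ (x = aV e 24 ∧ y = aV e' 14) ∨
     (x = aV e' 5 ∧ y = bV E e.1.2 1) ∨ (x = bV E e.1.2 1 ∧ y = bV E e.1.2 2) ∨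
     (x = bV E e.1.2 2 ∧ y = bV E e.1.2 3) ∨ (x = bV E e.1.2 3 ∧ y = aV e 23) ∨
     (x = aV e 24 ∧ y = bV E e.1.2 4) ∨ (x = bV E e.1.2 4 ∧ y = bV E e.1.2 5) ∨
     (x = bV E e.1.2 5 ∧ y = bV E e.1.2 6) ∨ (x = bV E e.1.2 6 ∧ y = aV e' 12)))

/-- The graph `G_E` of the construction. -/
def GE [Fintype V] (E : SimpleGraph V) [DecidableRel E.Adj]
    (f : Arc E ≃ Fin (Fintype.card (Arc E))) : SimpleGraph (GEVert E) :=
  SimpleGraph.fromRel (GERel E f)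

/-- The list `L` of vertices is a subpath of the closed walk `C`, i.e. it appears (forwards or
reversed) as a sequence of consecutive vertices of `C` (cyclically). -/
def IsSubpath {W : Type*} (G : SimpleGraph W) {x : W} (C : G.Walk x x) (L : List W) : Prop :=
  (∃ i : ℕ, ∀ (j : ℕ) (h : j < L.length), L.get ⟨j, h⟩ = C.getVert ((i + j) % C.length)) ∨
  (∃ i : ℕ, ∀ (j : ℕ) (h : j < L.reverse.length),
      L.reverse.get ⟨j, h⟩ = C.getVert ((i + j) % C.length))

/-- The expansion ratio of `E` is at least `1`: every nonempty `S` with `|S| ≤ |V|/2` has at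
least `|S|` boundary edges. -/
def ExpansionGeOne [Fintype V] (E : SimpleGraph V) : Prop :=
  ∀ S : Set V, S.Nonempty → 2 * S.ncard ≤ Fintype.card V →
    S.ncard ≤ {p : Sym2 V | p ∈ E.edgeSet ∧ ∃ x ∈ S, ∃ y, y ∉ S ∧ p = s(x, y)}.ncard

/-- The list of edges (as unordered pairs) of a list of vertices. -/
def listEdges {α : Type*} (L : List α) : List (Sym2 α) :=
  (L.zip L.tail).map fun p => s(p.1, p.2)


set_option linter.unusedSectionVars false

namespace Stmt13Aux

variable {V : Type*} [Fintype V] [DecidableEq V]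

def indeg (D : Finset (V × V)) (v : V) : ℕ := (D.filter fun p => p.2 = v).card
def outdeg (D : Finset (V × V)) (v : V) : ℕ := (D.filter fun p => p.1 = v).card
def bal (D : Finset (V × V)) (v : V) : ℤ := (indeg D v : ℤ) - (outdeg D v : ℤ)

def Good (E : SimpleGraph V) (S' : Finset V) (D : Finset (V × V)) : Prop :=
  (∀ p ∈ D, E.Adj p.1 p.2 ∧ p.2 ∈ S') ∧ ∀ p ∈ D, (p.2, p.1) ∉ D

def Res (E : SimpleGraph V) (D : Finset (V × V)) (v w : V) : Prop :=
  ((v, w) ∉ D ∧ (w, v) ∉ D ∧ E.Adj v w) ∨ (w, v) ∈ D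

inductive Reach (E : SimpleGraph V) (S' : Finset V) (D : Finset (V × V)) (s : V) : V → Prop
  | base : Reach E S' D s s
  | step (v w : V) : Reach E S' D s w → w ∈ S' → Res E D v w → Reach E S' D s v

def pairs (L : List V) : List (V × V) := L.zip L.tail

lemma filter_card_insert {α : Type*} [DecidableEq α] {s : Finset α} {a : α} (ha : a ∉ s)
    (p : α → Prop) [DecidablePred p] :
    ((insert a s).filter p).card = (s.filter p).card + if p a then 1 else 0 := by
  rw [Finset.filter_insert]
  split
  · rw [Finset.card_insert_of_notMem (fun h => ha (Finset.mem_filter.mp h).1)]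
  · simp

lemma bal_insert {D : Finset (V × V)} {p : V × V} (hp : p ∉ D) (v : V) :
    bal (insert p D) v
      = bal D v + (if p.2 = v then 1 else 0) - (if p.1 = v then 1 else 0) := by
  unfold bal indeg outdeg
  rw [filter_card_insert hp (fun q => q.2 = v), filter_card_insert hp (fun q => q.1 = v)]
  split <;> split <;> push_cast <;> ring

lemma bal_erase {D : Finset (V × V)} {p : V × V} (hp : p ∈ D) (v : V) :
    bal (D.erase p) v
      = bal D v - (if p.2 = v then 1 else 0) + (if p.1 = v then 1 else 0) := by
  have h := bal_insert (D := D.erase p) (p := p) (Finset.notMem_erase p D) v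
  rw [Finset.insert_erase hp] at h
  rw [h]; ring

lemma pairs_concat : ∀ (L : List V) (u a : V), L.getLast? = some u →
    pairs (L ++ [a]) = pairs L ++ [(u, a)] := by
  intro L
  induction L with
  | nil => intro u a h; simp at h
  | cons x t ih =>
    intro u a h
    cases t with
    | nil =>
      simp only [List.getLast?_singleton, Option.some_inj] at h
      subst h
      simp [pairs]
    | cons y t' =>
      have h' : (y :: t').getLast? = some u := by
        rwa [List.getLast?_cons_cons] at h
      have hih := ih u a h'
      show (x, y) :: pairs ((y :: t') ++ [a]) = ((x, y) :: pairs (y :: t')) ++ [(u, a)]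
      rw [hih]
      rfl

lemma reach_path {E : SimpleGraph V} {S' : Finset V} {D : Finset (V × V)} {s v : V}
    (h : Reach E S' D s v) :
    ∃ L : List V, L.Nodup ∧ L.head? = some v ∧ L.getLast? = some s ∧
      L.Chain' (Res E D) ∧ ∀ w ∈ L.tail, w ∈ S' := by
  induction h with
  | base => exact ⟨[s], by simp, by simp, by simp, List.isChain_singleton _, by simp⟩
  | step v w hr hw hres ih =>
    obtain ⟨L, hnd, hhd, hlast, hch, htl⟩ := ih
    have hLw : ∃ L', L = w :: L' := by
      cases L with
      | nil => simp at hhd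
      | cons x t => simp only [List.head?_cons, Option.some_inj] at hhd; exact ⟨t, by rw [hhd]⟩
    obtain ⟨L', rfl⟩ := hLw
    by_cases hv : v ∈ w :: L'
    · obtain ⟨A, C, hAC⟩ := List.append_of_mem hv
      refine ⟨v :: C, ?_, rfl, ?_, ?_, ?_⟩
      · have := hAC ▸ hnd
        exact this.of_append_right
      · have := hAC ▸ hlast
        rw [List.getLast?_append] at this
        have h1 : (v :: C).getLast? = some ((v :: C).getLast (by simp)) :=
          List.getLast?_eq_getLast _
        rw [h1, show (some ((v :: C).getLast (by simp))).or A.getLast?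
          = some ((v :: C).getLast (by simp)) from rfl] at this
        rw [h1, this]
      · exact hch.suffix ⟨A, hAC.symm⟩
      · intro x hx
        have hxL : x ∈ (w :: L').tail := by
          rw [hAC]
          cases A with
          | nil => simpa using hx
          | cons a A' => simp only [List.cons_append, List.tail_cons, List.mem_append,
              List.mem_cons]; right; right; exact hx
        exact htl x hxL
    · refine ⟨v :: w :: L', List.nodup_cons.mpr ⟨hv, hnd⟩, rfl, ?_, ?_, ?_⟩
      · rw [List.getLast?_cons_cons]
        rwa [← List.getLast?_cons_cons (a := w)]
      · exact List.isChain_cons.mpr ⟨fun y hy => by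
          simp only [List.head?_cons, Option.mem_def, Option.some_inj] at hy
          exact hy ▸ hres, hch⟩
      · intro x hx
        simp only [List.tail_cons, List.mem_cons] at hx
        rcases hx with rfl | hx
        · exact hw
        · exact htl x (by simpa using hx)

lemma getLast_mem_tail {α : Type*} (M : List α) (h2 : 2 ≤ M.length) (h : M ≠ []) :
    M.getLast h ∈ M.tail := by
  cases M with
  | nil => simp at h
  | cons x M' =>
    cases M' with
    | nil => simp at h2
    | cons y t =>
      rw [List.getLast_cons (by simp)]
      exact List.getLast_mem _

lemma bal_insert' {D : Finset (V × V)} {x y : V} (hp : (x, y) ∉ D) (v : V) :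
    bal (insert (x, y) D) v
      = bal D v + (if y = v then 1 else 0) - (if x = v then 1 else 0) :=
  bal_insert hp v

lemma bal_erase' {D : Finset (V × V)} {x y : V} (hp : (x, y) ∈ D) (v : V) :
    bal (D.erase (x, y)) v
      = bal D v - (if y = v then 1 else 0) + (if x = v then 1 else 0) :=
  bal_erase hp v

lemma applyAug (E : SimpleGraph V) (S' : Finset V) (D : Finset (V × V)) (hG : Good E S' D)
    (L : List V) :
    ∀ v₀ t : V, L.Nodup → L.Chain' (Res E D) →
      L.head? = some v₀ → L.getLast? = some t → v₀ ∉ S' → (∀ w ∈ L.tail, w ∈ S') →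
      2 ≤ L.length →
      ∃ D', Good E S' D' ∧ bal D' t = bal D t + 1 ∧
        (∀ v ∈ S', v ≠ t → bal D' v = bal D v) ∧
        (∀ a b : V, a ∉ L ∨ b ∉ L → ((a, b) ∈ D' ↔ (a, b) ∈ D)) := by
  induction L using List.reverseRecOn with
  | nil => intro v₀ t _ _ _ _ _ _ hlen; simp at hlen
  | append_singleton M a ih =>
    intro v₀ t hnd hch hhd hlast hv₀ htl hlen
    have hta : t = a := by
      rw [List.getLast?_concat] at hlast
      exact (Option.some_inj.mp hlast).symm
    subst hta
    have hMne : M ≠ [] := by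
      intro h; rw [h] at hlen; simp at hlen
    have hhdM : M.head? = some v₀ := by
      cases M with
      | nil => simp at hMne
      | cons x t' => simpa using hhd
    have hchsplit := List.isChain_append.mp hch
    have hchM : M.Chain' (Res E D) := hchsplit.1
    have htail_eq : (M ++ [t]).tail = M.tail ++ [t] := by
      cases M with
      | nil => simp at hMne
      | cons x t' => simp
    have htS : t ∈ S' := htl t (by rw [htail_eq]; simp)
    have htlM : ∀ w ∈ M.tail, w ∈ S' := by
      intro w hw; exact htl w (by rw [htail_eq]; simp [hw])
    have htM : t ∉ M := by
      have := List.nodup_append.mp hnd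
      intro h; exact this.2.2 t h t (by simp) rfl
    by_cases hM1 : M.length ≤ 1
    · -- base case : M = [v₀]
      have hMeq : M = [v₀] := by
        cases M with
        | nil => simp at hMne
        | cons x t' =>
          cases t' with
          | nil => simp only [List.head?_cons, Option.some_inj] at hhdM; rw [hhdM]
          | cons y t'' => simp at hM1
      subst hMeq
      have hres : Res E D v₀ t := hchsplit.2.2 v₀ (by simp) t (by simp)
      rcases hres with ⟨h1, h2, hadj⟩ | hrem
      · have hv₀t : v₀ ≠ t := fun h => E.irrefl (h ▸ hadj)
        refine ⟨insert (v₀, t) D, ⟨?_, ?_⟩, ?_, ?_, ?_⟩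
        · intro p hp
          rcases Finset.mem_insert.mp hp with rfl | hp
          · exact ⟨hadj, htS⟩
          · exact hG.1 p hp
        · intro p hp hswap
          obtain ⟨x, y⟩ := p
          rcases Finset.mem_insert.mp hp with heq | hpD
          · obtain ⟨rfl, rfl⟩ := Prod.mk.injEq .. ▸ (Prod.mk.injEq .. ▸ heq : x = v₀ ∧ y = t)
            rcases Finset.mem_insert.mp hswap with heq2 | hD2
            · exact hv₀t (Prod.mk.injEq .. ▸ heq2 : t = v₀ ∧ v₀ = t).2
            · exact h2 hD2
          · rcases Finset.mem_insert.mp hswap with heq2 | hD2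
            · obtain ⟨h3, h4⟩ := (Prod.mk.injEq .. ▸ heq2 : y = v₀ ∧ x = t)
              exact hv₀ (h3 ▸ (hG.1 (x, y) hpD).2)
            · exact hG.2 (x, y) hpD hD2
        · rw [bal_insert' h1, if_pos rfl, if_neg hv₀t]; ring
        · intro v hv hvt
          rw [bal_insert' h1, if_neg (Ne.symm hvt),
            if_neg (show v₀ ≠ v from fun h => hv₀ (h ▸ hv))]
          ring
        · intro x y hxy
          rw [Finset.mem_insert]
          constructor
          · rintro (heq | h)
            · obtain ⟨rfl, rfl⟩ := (Prod.mk.injEq .. ▸ heq : x = v₀ ∧ y = t)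
              exfalso
              rcases hxy with hx | hy
              · exact hx (by simp)
              · exact hy (by simp)
            · exact h
          · exact fun h => Or.inr h
      · exfalso
        exact hv₀ ((hG.1 _ hrem).2)
    · -- inductive case : 2 ≤ M.length
      push_neg at hM1
      have hM2 : 2 ≤ M.length := hM1
      set u := M.getLast hMne with hu
      have hulast : M.getLast? = some u := List.getLast?_eq_getLast _
      have huM : u ∈ M := List.getLast_mem _
      have hua : u ≠ t := fun h => htM (h ▸ huM)
      have hres : Res E D u t := hchsplit.2.2 u (by rw [hulast]; rfl) t (by simp)
      have huS : u ∈ S' := htlM u (getLast_mem_tail M hM2 hMne)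
      obtain ⟨D'', hG'', hbalu, hbalother, hinv⟩ :=
        ih v₀ u (hnd.of_append_left) hchM hhdM hulast hv₀ htlM hM2
      have hMsubL : ∀ x : V, x ∈ M → x ∈ M ++ [t] := fun x hx => by simp [hx]
      have htL : t ∈ M ++ [t] := by simp
      rcases hres with ⟨h1, h2, hadj⟩ | hrem
      · -- add the arc (u, t)
        have h1' : (u, t) ∉ D'' := fun h => h1 ((hinv u t (Or.inr htM)).mp h)
        have h2' : (t, u) ∉ D'' := fun h => h2 ((hinv t u (Or.inl htM)).mp h)
        refine ⟨insert (u, t) D'', ⟨?_, ?_⟩, ?_, ?_, ?_⟩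
        · intro p hp
          rcases Finset.mem_insert.mp hp with rfl | hp
          · exact ⟨hadj, htS⟩
          · exact hG''.1 p hp
        · intro p hp hswap
          obtain ⟨x, y⟩ := p
          rcases Finset.mem_insert.mp hp with heq | hpD
          · obtain ⟨hx1, hy1⟩ := (Prod.mk.injEq .. ▸ heq : x = u ∧ y = t)
            rcases Finset.mem_insert.mp hswap with heq2 | hD2
            · obtain ⟨hy2, hx2⟩ := (Prod.mk.injEq .. ▸ heq2 : y = u ∧ x = t)
              exact hua (hy2.symm.trans hy1)
            · exact h2' (by rw [← hy1, ← hx1]; exact hD2)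
          · rcases Finset.mem_insert.mp hswap with heq2 | hD2
            · obtain ⟨hy2, hx2⟩ := (Prod.mk.injEq .. ▸ heq2 : y = u ∧ x = t)
              exact h2' (by rw [← hx2, ← hy2]; exact hpD)
            · exact hG''.2 (x, y) hpD hD2
        · rw [bal_insert' h1', if_pos rfl, if_neg hua, hbalother t htS (Ne.symm hua)]
          ring
        · intro v hv hvt
          rw [bal_insert' h1', if_neg (Ne.symm hvt)]
          by_cases hvu : v = u
          · subst hvu
            rw [if_pos rfl, hbalu]; ring
          · rw [if_neg (Ne.symm hvu), hbalother v hv hvu]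
            ring
        · intro x y hxy
          rw [Finset.mem_insert]
          have hxy' : x ∉ M ∨ y ∉ M := by
            rcases hxy with hx | hy
            · exact Or.inl (fun h => hx (hMsubL x h))
            · exact Or.inr (fun h => hy (hMsubL y h))
          constructor
          · rintro (heq | h)
            · obtain ⟨rfl, rfl⟩ := (Prod.mk.injEq .. ▸ heq : x = u ∧ y = t)
              exfalso
              rcases hxy with hx | hy
              · exact hx (hMsubL u huM)
              · exact hy htL
            · exact (hinv x y hxy').mp h
          · exact fun h => Or.inr ((hinv x y hxy').mpr h)
      · -- remove the arc (t, u)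
        have hrem'' : (t, u) ∈ D'' := (hinv t u (Or.inl htM)).mpr hrem
        refine ⟨D''.erase (t, u), ⟨?_, ?_⟩, ?_, ?_, ?_⟩
        · exact fun p hp => hG''.1 p (Finset.mem_of_mem_erase hp)
        · exact fun p hp h2 =>
            hG''.2 p (Finset.mem_of_mem_erase hp) (Finset.mem_of_mem_erase h2)
        · rw [bal_erase' hrem'', if_neg hua, if_pos rfl, hbalother t htS (Ne.symm hua)]
          ring
        · intro v hv hvt
          rw [bal_erase' hrem'', if_neg (Ne.symm hvt)]
          by_cases hvu : v = u
          · subst hvu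
            rw [if_pos rfl, hbalu]; ring
          · rw [if_neg (Ne.symm hvu), hbalother v hv hvu]
            ring
        · intro x y hxy
          have hxy' : x ∉ M ∨ y ∉ M := by
            rcases hxy with hx | hy
            · exact Or.inl (fun h => hx (hMsubL x h))
            · exact Or.inr (fun h => hy (hMsubL y h))
          rw [Finset.mem_erase]
          constructor
          · rintro ⟨-, h⟩
            exact (hinv x y hxy').mp h
          · intro h
            refine ⟨?_, (hinv x y hxy').mpr h⟩
            intro heq
            obtain ⟨rfl, rfl⟩ := (Prod.mk.injEq .. ▸ heq : x = t ∧ y = u)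
            rcases hxy with hx | hy
            · exact hx htL
            · exact hy (hMsubL u huM)

lemma augment (E : SimpleGraph V) (hexp : ExpansionGeOne E) (S' : Finset V)
    (hS : 2 * S'.card ≤ Fintype.card V)
    (D : Finset (V × V)) (hG : Good E S' D) (R : Finset V)
    (hbal : ∀ v ∈ S', bal D v = if v ∈ R then 1 else 0)
    (s : V) (hs : s ∈ S') (hsR : s ∉ R) :
    ∃ D', Good E S' D' ∧ ∀ v ∈ S', bal D' v = if v ∈ insert s R then 1 else 0 := by
  classical
  by_cases hcase : ∃ v, Reach E S' D s v ∧ v ∉ S'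
  · obtain ⟨v₀, hv₀r, hv₀⟩ := hcase
    obtain ⟨L, hnd, hhd, hlast, hch, htl⟩ := reach_path hv₀r
    have hv₀s : v₀ ≠ s := fun h => hv₀ (h ▸ hs)
    have hlen : 2 ≤ L.length := by
      match L, hhd, hlast with
      | [], hhd, _ => simp at hhd
      | [x], hhd, hlast =>
        exfalso
        simp only [List.head?_cons, Option.some_inj] at hhd
        simp only [List.getLast?_singleton, Option.some_inj] at hlast
        exact hv₀s (hhd.symm.trans hlast)
      | x :: y :: t, _, _ => simp [List.length]
    obtain ⟨D', hG', hbt, hbo, -⟩ :=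
      applyAug E S' D hG L v₀ s hnd hch hhd hlast hv₀ htl hlen
    refine ⟨D', hG', fun v hv => ?_⟩
    by_cases hvs : v = s
    · subst hvs
      rw [hbt, hbal v hv, if_neg hsR, if_pos (Finset.mem_insert_self v R)]
      ring
    · rw [hbo v hv hvs, hbal v hv]
      by_cases hvR : v ∈ R
      · rw [if_pos hvR, if_pos (Finset.mem_insert_of_mem hvR)]
      · rw [if_neg hvR, if_neg (by simp [hvs, hvR])]
  · push_neg at hcase
    exfalso
    set X := Finset.univ.filter (Reach E S' D s) with hX
    have hmemX : ∀ v, v ∈ X ↔ Reach E S' D s v := by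
      intro v; simp [hX]
    have hXS : ∀ v ∈ X, v ∈ S' := fun v hv => hcase v ((hmemX v).mp hv)
    have hsX : s ∈ X := (hmemX s).mpr Reach.base
    have hclosed : ∀ p ∈ D, p.1 ∈ X → p.2 ∈ X := by
      intro p hp h1
      exact (hmemX _).mpr
        (Reach.step p.2 p.1 ((hmemX _).mp h1) (hXS _ h1) (Or.inr hp))
    have hbd : ∀ x ∈ X, ∀ y, y ∉ X → E.Adj x y → (y, x) ∈ D := by
      intro x hx y hy hadj
      by_contra hyx
      have hxy : (x, y) ∉ D := fun h => hy (hclosed (x, y) h hx)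
      exact hy ((hmemX y).mpr
        (Reach.step y x ((hmemX x).mp hx) (hXS x hx) (Or.inl ⟨hyx, hxy, hadj.symm⟩)))
    -- expansion gives many arcs entering X
    have hXcard2 : 2 * X.card ≤ Fintype.card V := by
      have := Finset.card_le_card (fun v hv => hXS v hv)
      omega
    have hexpX := hexp (↑X : Set V) ⟨s, by exact_mod_cast hsX⟩
      (by rw [Set.ncard_coe_finset]; exact hXcard2)
    set inE := D.filter (fun q => q.2 ∈ X ∧ q.1 ∉ X) with hinE
    have hsubB : {p : Sym2 V | p ∈ E.edgeSet ∧ ∃ x ∈ (↑X : Set V), ∃ y, y ∉ (↑X : Set V) ∧ p = s(x, y)}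
        ⊆ ↑(inE.image fun q => s(q.1, q.2)) := by
      rintro p ⟨hpE, x, hx, y, hy, rfl⟩
      have hadj : E.Adj x y := hpE
      have hxX : x ∈ X := by exact_mod_cast hx
      have hyX : y ∉ X := by intro h; exact hy (by exact_mod_cast h)
      have hD : (y, x) ∈ D := hbd x hxX y hyX hadj
      refine Finset.mem_coe.mpr (Finset.mem_image.mpr ⟨(y, x), ?_, ?_⟩)
      · exact Finset.mem_filter.mpr ⟨hD, hxX, hyX⟩
      · exact Sym2.eq_swap
    have h1 : X.card ≤ inE.card := by
      calc X.card = (↑X : Set V).ncard := (Set.ncard_coe_finset X).symm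
        _ ≤ _ := hexpX
        _ ≤ (↑(inE.image fun q => s(q.1, q.2)) : Set (Sym2 V)).ncard :=
            Set.ncard_le_ncard hsubB (Finset.finite_toSet _)
        _ = (inE.image fun q => s(q.1, q.2)).card := Set.ncard_coe_finset _
        _ ≤ inE.card := Finset.card_image_le
    -- fiberwise counting
    have hfib2 : (D.filter fun p => p.2 ∈ X).card = ∑ v ∈ X, indeg D v := by
      rw [Finset.card_eq_sum_card_fiberwise
        (s := D.filter fun p => p.2 ∈ X) (f := Prod.snd) (t := X) (fun p hp => (Finset.mem_filter.mp hp).2)]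
      refine Finset.sum_congr rfl fun v hv => ?_
      unfold indeg
      rw [Finset.filter_filter]
      refine congrArg Finset.card (Finset.filter_congr fun p _ => ?_)
      exact ⟨fun h => h.2, fun h => ⟨h ▸ hv, h⟩⟩
    have hfib1 : (D.filter fun p => p.1 ∈ X).card = ∑ v ∈ X, outdeg D v := by
      rw [Finset.card_eq_sum_card_fiberwise
        (s := D.filter fun p => p.1 ∈ X) (f := Prod.fst) (t := X) (fun p hp => (Finset.mem_filter.mp hp).2)]
      refine Finset.sum_congr rfl fun v hv => ?_
      unfold outdeg
      rw [Finset.filter_filter]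
      refine congrArg Finset.card (Finset.filter_congr fun p _ => ?_)
      exact ⟨fun h => h.2, fun h => ⟨h ▸ hv, h⟩⟩
    have hout : (D.filter fun p => p.1 ∈ X) = D.filter (fun p => p.2 ∈ X ∧ p.1 ∈ X) := by
      ext p
      simp only [Finset.mem_filter]
      exact ⟨fun ⟨h1, h2⟩ => ⟨h1, hclosed p h1 h2, h2⟩, fun ⟨h1, h2⟩ => ⟨h1, h2.2⟩⟩
    have hpart : (D.filter fun p => p.2 ∈ X).card
        = (D.filter fun p => p.2 ∈ X ∧ p.1 ∈ X).card + inE.card := by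
      have := Finset.card_filter_add_card_filter_not
        (s := D.filter fun p => p.2 ∈ X) (p := fun q => q.1 ∈ X)
      rw [Finset.filter_filter, Finset.filter_filter] at this
      rw [hinE]
      omega
    have hbalsum : ∑ v ∈ X, bal D v = (inE.card : ℤ) := by
      unfold bal
      rw [Finset.sum_sub_distrib]
      rw [← Nat.cast_sum, ← Nat.cast_sum, ← hfib2, ← hfib1, hout, hpart]
      push_cast
      ring
    have hRsum : ∑ v ∈ X, bal D v = ((X.filter (· ∈ R)).card : ℤ) := by
      rw [Finset.sum_congr rfl (fun v hv => hbal v (hXS v hv))]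
      exact Finset.sum_boole _ _
    have hRsub : X.filter (· ∈ R) ⊆ X.erase s := by
      intro v hv
      obtain ⟨h1, h2⟩ := Finset.mem_filter.mp hv
      exact Finset.mem_erase.mpr ⟨fun h => hsR (h ▸ h2), h1⟩
    have h2 : (X.filter (· ∈ R)).card ≤ X.card - 1 := by
      have := Finset.card_le_card hRsub
      rwa [Finset.card_erase_of_mem hsX] at this
    have h3 : 1 ≤ X.card := Finset.card_pos.mpr ⟨s, hsX⟩
    have h4 : inE.card = (X.filter (· ∈ R)).card := by
      have := hbalsum.symm.trans hRsum
      exact_mod_cast this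
    omega

lemma existsD (E : SimpleGraph V) (hexp : ExpansionGeOne E) (S' : Finset V)
    (hS : 2 * S'.card ≤ Fintype.card V) :
    ∀ R : Finset V, R ⊆ S' →
      ∃ D, Good E S' D ∧ ∀ v ∈ S', bal D v = if v ∈ R then 1 else 0 := by
  intro R
  induction R using Finset.induction_on with
  | empty =>
    intro _
    refine ⟨∅, ⟨by simp, by simp⟩, fun v hv => by simp [bal, indeg, outdeg]⟩
  | @insert a R ha ih =>
    intro hsub
    obtain ⟨D, hG, hbal⟩ := ih (Finset.insert_subset_iff.mp hsub).2
    exact augment E hexp S' hS D hG R hbal a (Finset.insert_subset_iff.mp hsub).1 ha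

lemma head?_append_singleton {α : Type*} (P : List α) (a : α) (h : P ≠ []) :
    (P ++ [a]).head? = P.head? := by
  cases P with
  | nil => exact absurd rfl h
  | cons z t => rfl

lemma tail_append_singleton {α : Type*} (P : List α) (a : α) (h : P ≠ []) :
    (P ++ [a]).tail = P.tail ++ [a] := by
  cases P with
  | nil => exact absurd rfl h
  | cons z t => simp

lemma decomp (E : SimpleGraph V) (S' : Finset V) :
    ∀ (n : ℕ) (D : Finset (V × V)), D.card = n → Good E S' D →
    ∀ b : V → ℕ, (∀ v ∈ S', bal D v = b v) →
    ∃ Q : V → ℕ → List V,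
      (∀ v ∈ S', ∀ i < b v,
        (Q v i).Chain' E.Adj ∧
        (∃ x, (Q v i).head? = some x ∧ x ∉ S') ∧
        (Q v i).getLast? = some v ∧
        (∀ x ∈ (Q v i).tail, x ∈ S') ∧
        (∀ p ∈ pairs (Q v i), p ∈ D)) ∧
      (∀ v ∈ S', ∀ i < b v, ∀ w ∈ S', ∀ j < b w, (v, i) ≠ (w, j) →
        ∀ p ∈ pairs (Q v i), p ∉ pairs (Q w j)) := by
  intro n
  induction n using Nat.strong_induction_on with
  | _ n ih =>
    intro D hcard hG b hb
    by_cases hub : ∀ v ∈ S', b v = 0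
    · refine ⟨fun _ _ => [], fun v hv i hi => absurd hi (by simp [hub v hv]),
        fun v hv i hi => absurd hi (by simp [hub v hv])⟩
    · push_neg at hub
      obtain ⟨s, hs, hbs⟩ := hub
      have hbs1 : 1 ≤ b s := Nat.one_le_iff_ne_zero.mpr hbs
      have hindeg : 1 ≤ indeg D s := by
        have hh := hb s hs
        unfold bal at hh
        omega
      obtain ⟨u, hus⟩ : ∃ u, (u, s) ∈ D := by
        obtain ⟨p, hp⟩ := Finset.card_pos.mp hindeg
        obtain ⟨hp1, hp2⟩ := Finset.mem_filter.mp hp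
        exact ⟨p.1, by rwa [show (p.1, s) = p from by rw [← hp2]]⟩
      have hadj : E.Adj u s := (hG.1 _ hus).1
      have hus_ne : u ≠ s := fun h => E.irrefl (h ▸ hadj)
      set D' := D.erase (u, s) with hD'
      have hn1 : 1 ≤ n := by
        rw [← hcard]
        exact Finset.card_pos.mpr ⟨(u, s), hus⟩
      have hD'card : D'.card < n := by
        rw [hD', Finset.card_erase_of_mem hus, hcard]
        omega
      have hG' : Good E S' D' :=
        ⟨fun q hq => hG.1 q (Finset.mem_of_mem_erase hq),
         fun q hq h2 => hG.2 q (Finset.mem_of_mem_erase hq) (Finset.mem_of_mem_erase h2)⟩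
      have hbal' : ∀ v, bal D' v
          = bal D v - (if s = v then 1 else 0) + (if u = v then 1 else 0) :=
        fun v => bal_erase' hus v
      have hD'sub : ∀ p ∈ D', p ∈ D := fun p hp => Finset.mem_of_mem_erase hp
      have husD' : (u, s) ∉ D' := Finset.notMem_erase _ _
      by_cases huS : u ∈ S'
      · -- the arc comes from inside S' : extend a path ending at u
        have hbb' : ∀ v ∈ S', bal D' v
            = ((if v = s then b s - 1 else if v = u then b v + 1 else b v : ℕ) : ℤ) := by
          intro v hv
          rw [hbal' v, hb v hv]
          by_cases h1 : v = s
          · subst h1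
            rw [if_pos rfl, if_pos rfl, if_neg hus_ne]
            omega
          · rw [if_neg (fun h : s = v => h1 h.symm), if_neg h1]
            by_cases h2 : v = u
            · subst h2
              rw [if_pos rfl, if_pos rfl]
              omega
            · rw [if_neg (fun h : u = v => h2 h.symm), if_neg h2]
              omega
        obtain ⟨Q', hQ'p, hQ'd⟩ := ih D'.card hD'card D' rfl hG'
          (fun v => if v = s then b s - 1 else if v = u then b v + 1 else b v) hbb'
        have hbu' : b u < if u = s then b s - 1 else if u = u then b u + 1 else b u := by
          rw [if_neg hus_ne, if_pos rfl]
          omega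
        obtain ⟨hPch, ⟨x₀, hPx₀, hx₀⟩, hPlast, hPtl, hPsub⟩ := hQ'p u huS (b u) hbu'
        set P := Q' u (b u) with hP
        have hPne : P ≠ [] := fun h => by rw [h] at hPlast; simp at hPlast
        have htrans : ∀ w ∈ S', ∀ j, j < b w → ¬(w = s ∧ j = b s - 1) →
            j < if w = s then b s - 1 else if w = u then b w + 1 else b w := by
          intro w hw j hj hns
          by_cases h1 : w = s
          · subst h1
            rw [if_pos rfl]
            have : j ≠ b w - 1 := fun h => hns ⟨rfl, h⟩
            omega
          · by_cases h2 : w = u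
            · rw [if_neg h1, if_pos h2]; omega
            · rw [if_neg h1, if_neg h2]; omega
        have hne_ub : ∀ w ∈ S', ∀ j, j < b w → (u, b u) ≠ (w, j) := by
          intro w hw j hj h
          obtain ⟨h1, h2⟩ := (Prod.mk.injEq .. ▸ h : u = w ∧ b u = j)
          rw [← h1] at hj
          omega
        have hspecial_pairs : pairs (P ++ [s]) = pairs P ++ [(u, s)] :=
          pairs_concat P u s hPlast
        refine ⟨fun v i => if v = s ∧ i = b s - 1 then P ++ [s] else Q' v i, ?_, ?_⟩
        · intro v hv i hi
          beta_reduce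
          by_cases hsp : v = s ∧ i = b s - 1
          · obtain ⟨rfl, rfl⟩ := hsp
            rw [if_pos ⟨rfl, rfl⟩]
            refine ⟨?_, ⟨x₀, ?_, hx₀⟩, List.getLast?_concat, ?_, ?_⟩
            · refine List.isChain_append.mpr ⟨hPch, by simp, ?_⟩
              intro x hx y hy
              rw [hPlast] at hx
              simp only [Option.mem_def, Option.some_inj] at hx
              simp only [List.head?_cons, Option.mem_def, Option.some_inj] at hy
              rw [← hx, ← hy]
              exact hadj
            · rw [head?_append_singleton P _ hPne]
              exact hPx₀
            · intro x hx
              rw [tail_append_singleton P _ hPne, List.mem_append] at hx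
              rcases hx with hx | hx
              · exact hPtl x hx
              · simp only [List.mem_singleton] at hx
                rw [hx]; exact hs
            · intro p hp
              rw [hspecial_pairs, List.mem_append] at hp
              rcases hp with hp | hp
              · exact hD'sub p (hPsub p hp)
              · simp only [List.mem_singleton] at hp
                rw [hp]; exact hus
          · rw [if_neg hsp]
            obtain ⟨c1, c2, c3, c4, c5⟩ := hQ'p v hv i (htrans v hv i hi hsp)
            exact ⟨c1, c2, c3, c4, fun p hp => hD'sub p (c5 p hp)⟩
        · intro v hv i hi w hw j hj hne p hp hp'
          beta_reduce at hp hp'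
          by_cases hsp1 : v = s ∧ i = b s - 1
          · obtain ⟨rfl, rfl⟩ := hsp1
            rw [if_pos ⟨rfl, rfl⟩, hspecial_pairs, List.mem_append] at hp
            by_cases hsp2 : w = v ∧ j = b v - 1
            · obtain ⟨rfl, rfl⟩ := hsp2
              exact hne rfl
            · rw [if_neg hsp2] at hp'
              rcases hp with hp | hp
              · exact hQ'd u huS (b u) hbu' w hw j (htrans w hw j hj hsp2)
                  (hne_ub w hw j hj) p hp hp'
              · simp only [List.mem_singleton] at hp
                rw [hp] at hp'
                exact husD' ((hQ'p w hw j (htrans w hw j hj hsp2)).2.2.2.2 _ hp')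
          · rw [if_neg hsp1] at hp
            by_cases hsp2 : w = s ∧ j = b s - 1
            · obtain ⟨rfl, rfl⟩ := hsp2
              rw [if_pos ⟨rfl, rfl⟩, hspecial_pairs, List.mem_append] at hp'
              rcases hp' with hp' | hp'
              · exact hQ'd v hv i (htrans v hv i hi hsp1) u huS (b u) hbu'
                  (fun h => hne_ub v hv i hi h.symm) p hp hp'
              · simp only [List.mem_singleton] at hp'
                rw [hp'] at hp
                exact husD' ((hQ'p v hv i (htrans v hv i hi hsp1)).2.2.2.2 _ hp)
            · rw [if_neg hsp2] at hp'
              exact hQ'd v hv i (htrans v hv i hi hsp1) w hw j (htrans w hw j hj hsp2)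
                hne p hp hp'
      · -- the arc comes from outside S' : a new single-edge path
        have hbb' : ∀ v ∈ S', bal D' v = ((if v = s then b s - 1 else b v : ℕ) : ℤ) := by
          intro v hv
          rw [hbal' v, hb v hv]
          have hu_ne : u ≠ v := fun h => huS (h ▸ hv)
          by_cases h1 : v = s
          · subst h1
            rw [if_pos rfl, if_pos rfl, if_neg hu_ne]
            omega
          · rw [if_neg (fun h : s = v => h1 h.symm), if_neg hu_ne, if_neg h1]
            omega
        obtain ⟨Q', hQ'p, hQ'd⟩ := ih D'.card hD'card D' rfl hG'
          (fun v => if v = s then b s - 1 else b v) hbb'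
        have htrans : ∀ w ∈ S', ∀ j, j < b w → ¬(w = s ∧ j = b s - 1) →
            j < if w = s then b s - 1 else b w := by
          intro w hw j hj hns
          by_cases h1 : w = s
          · subst h1
            rw [if_pos rfl]
            have : j ≠ b w - 1 := fun h => hns ⟨rfl, h⟩
            omega
          · rw [if_neg h1]; omega
        have hpairs_us : pairs [u, s] = [(u, s)] := rfl
        refine ⟨fun v i => if v = s ∧ i = b s - 1 then [u, s] else Q' v i, ?_, ?_⟩
        · intro v hv i hi
          beta_reduce
          by_cases hsp : v = s ∧ i = b s - 1
          · obtain ⟨rfl, rfl⟩ := hsp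
            rw [if_pos ⟨rfl, rfl⟩]
            refine ⟨?_, ⟨u, rfl, huS⟩, rfl, ?_, ?_⟩
            · exact List.isChain_cons_cons.mpr ⟨hadj, by simp⟩
            · intro x hx
              simp only [List.tail_cons, List.mem_singleton] at hx
              rw [hx]; exact hs
            · intro p hp
              rw [hpairs_us, List.mem_singleton] at hp
              rw [hp]; exact hus
          · rw [if_neg hsp]
            obtain ⟨c1, c2, c3, c4, c5⟩ := hQ'p v hv i (htrans v hv i hi hsp)
            exact ⟨c1, c2, c3, c4, fun p hp => hD'sub p (c5 p hp)⟩
        · intro v hv i hi w hw j hj hne p hp hp'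
          beta_reduce at hp hp'
          by_cases hsp1 : v = s ∧ i = b s - 1
          · obtain ⟨rfl, rfl⟩ := hsp1
            rw [if_pos ⟨rfl, rfl⟩, hpairs_us, List.mem_singleton] at hp
            by_cases hsp2 : w = v ∧ j = b v - 1
            · obtain ⟨rfl, rfl⟩ := hsp2
              exact hne rfl
            · rw [if_neg hsp2] at hp'
              rw [hp] at hp'
              exact husD' ((hQ'p w hw j (htrans w hw j hj hsp2)).2.2.2.2 _ hp')
          · rw [if_neg hsp1] at hp
            by_cases hsp2 : w = s ∧ j = b s - 1
            · obtain ⟨rfl, rfl⟩ := hsp2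
              rw [if_pos ⟨rfl, rfl⟩, hpairs_us, List.mem_singleton] at hp'
              rw [hp'] at hp
              exact husD' ((hQ'p v hv i (htrans v hv i hi hsp1)).2.2.2.2 _ hp)
            · rw [if_neg hsp2] at hp'
              exact hQ'd v hv i (htrans v hv i hi hsp1) w hw j (htrans w hw j hj hsp2)
                hne p hp hp'

end Stmt13Aux

/-- In a `d`-regular graph `E` with expansion ratio at least `1`, for any
set `S' = {s'_1, …, s'_m}` with `m ≤ |V(E)|/2` there are pairwise edge-disjoint paths
`Q_1, …, Q_m` in `E` such that `Q_i` ends in `s'_i`, all of its vertices except the first lie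
in `S'`, and its first vertex lies outside `S'`. -/
theorem stmt13 {V : Type*} [Fintype V] [DecidableEq V] (E : SimpleGraph V)
    (d : ℕ) (hreg : IsRegularDeg E d) (hexp : ExpansionGeOne E)
    (S' : Finset V) (hm : 2 * S'.card ≤ Fintype.card V) :
    ∃ Q : {s : V // s ∈ S'} → List V,
      (∀ s, (Q s).Chain' E.Adj) ∧
      (∀ s, ∃ x : V, (Q s).head? = some x ∧ x ∉ S') ∧
      (∀ s, (Q s).getLast? = some s.1) ∧
      (∀ s, ∀ x ∈ (Q s).tail, x ∈ S') ∧
      (∀ s t, s ≠ t → ∀ p ∈ listEdges (Q s), p ∉ listEdges (Q t)) := by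
  classical
  obtain ⟨D, hG, hbal⟩ := Stmt13Aux.existsD E hexp S' hm S' (subset_refl S')
  have hb : ∀ v ∈ S', Stmt13Aux.bal D v = ((fun _ : V => 1) v : ℕ) := by
    intro v hv
    rw [hbal v hv, if_pos hv]
    norm_num
  obtain ⟨Q', hQp, hQd⟩ := Stmt13Aux.decomp E S' D.card D rfl hG (fun _ => 1) hb
  refine ⟨fun s => Q' s.1 0, ?_, ?_, ?_, ?_, ?_⟩
  · intro s; exact (hQp s.1 s.2 0 one_pos).1
  · intro s; exact (hQp s.1 s.2 0 one_pos).2.1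
  · intro s; exact (hQp s.1 s.2 0 one_pos).2.2.1
  · intro s; exact (hQp s.1 s.2 0 one_pos).2.2.2.1
  · intro s t hst p hps hpt
    unfold listEdges at hps hpt
    rw [List.mem_map] at hps hpt
    obtain ⟨q, hq, rfl⟩ := hps
    obtain ⟨r, hr, hqr⟩ := hpt
    have hqD : q ∈ D := (hQp s.1 s.2 0 one_pos).2.2.2.2 q hq
    have hrD : r ∈ D := (hQp t.1 t.2 0 one_pos).2.2.2.2 r hr
    have hne : (s.1, (0 : ℕ)) ≠ (t.1, (0 : ℕ)) :=
      fun h => hst (Subtype.ext (congrArg Prod.fst h))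
    have hdisj := hQd s.1 s.2 0 one_pos t.1 t.2 0 one_pos hne q hq
    rcases Sym2.eq_iff.mp hqr.symm with ⟨h1, h2⟩ | ⟨h1, h2⟩
    · exact hdisj (by rw [show q = r from Prod.ext h1 h2]; exact hr)
    · exact hG.2 q hqD (by rw [show (q.2, q.1) = r from Prod.ext h2 h1]; exact hrD)
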